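/- Let V be a finite set and for each i ∈ {1,…,r} let S^i = ∪_{j=1}^{s_i} P(T^{i,j}) with T^{i,j} ⊆ V and ∪_j T^{i,j} = V, where P(T) = {λ ∈ Δ^V : supp(λ) ⊆ T}. Suppose for each i there is a polyhedron R^i ⊆ R^V × R^{r_i} such that {(λ,y) ∈ R^i : y ∈ Z^{r_i}} projects onto S^i in λ (validity), Proj_λ(R^i) = conv(S^i) (sharpness), and all extreme points of R^i have integral y (idealness). Then the combined polyhedron R = {(λ, y^1, …, y^r) : (λ, y^i) ∈ R^i for all i} is sharp for ∩_{i=1}^r S^i: Proj_λ(R) = conv(∩_{i=1}^r S^i) = Δ^V. -/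

import Mathlib

/-- If a set is squeezed between the basis vectors and the standard simplex,
its convex hull is the standard simplex. -/
lemma hull_eq_stdSimplex_of_squeeze {V : Type*} [Fintype V] [DecidableEq V]
    (A : Set (V → ℝ))
    (hsub : A ⊆ stdSimplex ℝ V)
    (hbasis : ∀ v : V, (fun w : V => if v = w then (1 : ℝ) else 0) ∈ A) :
    convexHull ℝ A = stdSimplex ℝ V := by
  refine le_antisymm (convexHull_min hsub (convex_stdSimplex ℝ V)) ?_
  rw [← convexHull_basis_eq_stdSimplex]
  exact convexHull_mono (by rintro _ ⟨v, rfl⟩; convert hbasis v using 2 with w)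

/-- Sharpness of the intersection of sharp formulations of combinatorial
disjunctive constraints: if each `Rⁱ` is a (convex) sharp, valid, ideal
formulation of `Sⁱ = ∪_j P(T^{i,j})` with `∪_j T^{i,j} = V`, then the combined
relaxation `R = {(λ,y¹,…,yʳ) : (λ,yⁱ) ∈ Rⁱ ∀i}` projects in `λ` onto
`conv(∩_i Sⁱ) = Δ^V`. -/
theorem combined_formulation_sharp
    {V : Type*} [Fintype V] [DecidableEq V] {r : ℕ} (hr : 1 ≤ r)
    (s ri : Fin r → ℕ)
    (T : (i : Fin r) → Fin (s i) → Finset V)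
    (hcover : ∀ i (v : V), ∃ j, v ∈ T i j)
    (S : Fin r → Set (V → ℝ))
    (hS : ∀ i, S i = {lam | lam ∈ stdSimplex ℝ V ∧ ∃ j, ∀ v, lam v ≠ 0 → v ∈ T i j})
    (R : (i : Fin r) → Set ((V → ℝ) × (Fin (ri i) → ℝ)))
    (hconv : ∀ i, Convex ℝ (R i))
    (hvalid : ∀ i, {lam | ∃ y, (lam, y) ∈ R i ∧ ∀ k, ∃ z : ℤ, y k = (z : ℝ)} = S i)
    (hsharp : ∀ i, Prod.fst '' R i = convexHull ℝ (S i))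
    (hideal : ∀ i, ∀ p ∈ Set.extremePoints ℝ (R i), ∀ k, ∃ z : ℤ, p.2 k = (z : ℝ)) :
    {lam : V → ℝ | ∀ i, ∃ y, (lam, y) ∈ R i} = convexHull ℝ (⋂ i, S i) ∧
    convexHull ℝ (⋂ i, S i) = stdSimplex ℝ V := by
  -- basis vectors belong to every S i
  have hbasisS : ∀ (i : Fin r) (v : V),
      (fun w : V => if v = w then (1 : ℝ) else 0) ∈ S i := by
    intro i v
    rw [hS i]
    refine ⟨ite_eq_mem_stdSimplex ℝ v, ?_⟩
    obtain ⟨j, hj⟩ := hcover i v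
    refine ⟨j, fun w hw => ?_⟩
    by_cases hvw : v = w
    · exact hvw ▸ hj
    · simp [hvw] at hw
  have hSsub : ∀ i, S i ⊆ stdSimplex ℝ V := by
    intro i lam hlam; rw [hS i] at hlam; exact hlam.1
  have hhullS : ∀ i, convexHull ℝ (S i) = stdSimplex ℝ V := fun i =>
    hull_eq_stdSimplex_of_squeeze _ (hSsub i) (hbasisS i)
  have hInter : convexHull ℝ (⋂ i, S i) = stdSimplex ℝ V := by
    refine hull_eq_stdSimplex_of_squeeze _ ?_ ?_
    · intro lam hlam
      exact hSsub ⟨0, hr⟩ (Set.mem_iInter.mp hlam ⟨0, hr⟩)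
    · intro v; exact Set.mem_iInter.mpr fun i => hbasisS i v
  refine ⟨?_, hInter⟩
  rw [hInter]
  ext lam
  simp only [Set.mem_setOf_eq]
  constructor
  · intro h
    obtain ⟨y, hy⟩ := h ⟨0, hr⟩
    have : lam ∈ Prod.fst '' R ⟨0, hr⟩ := ⟨(lam, y), hy, rfl⟩
    rw [hsharp, hhullS] at this
    exact this
  · intro h i
    have : lam ∈ Prod.fst '' R i := by rw [hsharp, hhullS]; exact h
    obtain ⟨⟨lam', y⟩, hmem, heq⟩ := this
    exact ⟨y, heq ▸ hmem⟩
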